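/- Let ρ_0, ρ_1, ρ_2 be 2×2 diagonal complex positive semidefinite matrices of trace 1 (incoherent qubit states), and for each x ∈ {0,1} let E_{0,x} and E_{1,x} be 2×2 diagonal positive semidefinite matrices with E_{0,x} + E_{1,x} ≤ 𝟙 in the Loewner order (POVM elements of incoherent operations). Then the coherence witness W_C := Re Tr(E_{0,0} ρ_0) + Re Tr(E_{0,0} ρ_1) + Re Tr(E_{0,1} ρ_0) + Re Tr(E_{1,1} ρ_1) + Re Tr(E_{1,0} ρ_2) satisfies W_C ≤ 4. -/

import Mathlib

open Matrix Complex
open scoped ComplexOrder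

set_option maxHeartbeats 1000000

lemma diag_nn {n : Type*} [Fintype n] [DecidableEq n] {M : Matrix n n ℂ}
    (h : M.PosSemidef) (i : n) : 0 ≤ M i i := by
  exact h.diag_nonneg

lemma tr_re (M N : Matrix (Fin 2) (Fin 2) ℂ) (hM : M.IsDiag)
    (hMim : ∀ i, (M i i).im = 0) :
    ((M * N).trace).re = (M 0 0).re * (N 0 0).re + (M 1 1).re * (N 1 1).re := by
  have h1 := hM (show (0:Fin 2) ≠ 1 by decide)
  have h2 := hM (show (1:Fin 2) ≠ 0 by decide)
  simp [Matrix.trace, Matrix.diag, Matrix.mul_apply, Fin.sum_univ_two, h1, h2,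
    Complex.add_re, Complex.mul_re, hMim]


lemma key (p p' q q' r r' A A' B B' C C' D D' : ℝ)
    (hp : 0 ≤ p) (hp' : 0 ≤ p') (hq : 0 ≤ q) (hq' : 0 ≤ q') (hr : 0 ≤ r) (hr' : 0 ≤ r')
    (hps : p + p' = 1) (hqs : q + q' = 1) (hrs : r + r' = 1)
    (hA : 0 ≤ A) (hA' : 0 ≤ A') (hB : 0 ≤ B) (hB' : 0 ≤ B')
    (hC : 0 ≤ C) (hC' : 0 ≤ C') (hD : 0 ≤ D) (hD' : 0 ≤ D')
    (hAC : A + C ≤ 1) (hAC' : A' + C' ≤ 1) (hBD : B + D ≤ 1) (hBD' : B' + D' ≤ 1) :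
    A*(p+q) + A'*(p'+q') + B*p + B'*p' + D*q + D'*q' + C*r + C'*r' ≤ 4 := by
  have h1 : C*r ≤ r - A*r := by nlinarith [mul_le_mul_of_nonneg_right hAC hr]
  have h2 : C'*r' ≤ r' - A'*r' := by linarith [mul_le_mul_of_nonneg_right hAC' hr']
  have h3 : D*q ≤ q - B*q := by linarith [mul_le_mul_of_nonneg_right hBD hq]
  have h4 : D'*q' ≤ q' - B'*q' := by linarith [mul_le_mul_of_nonneg_right hBD' hq']
  have key' : A*(p+q-r) + A'*(p'+q'-r') + B*(p-q) + B'*(p'-q') ≤ 2 := by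
    have hp1 : p ≤ 1 := by linarith
    have hq1 : q ≤ 1 := by linarith
    have hr1 : r ≤ 1 := by linarith
    have hc' : p'+q'-r' = 1 - (p+q-r) := by linarith
    have hd' : p'-q' = -(p-q) := by linarith
    rw [hc', hd']
    rcases le_total q p with hd | hd
    · rcases le_total (p+q) r with hc | hc
      · linarith [mul_nonneg hA (by linarith : 0 ≤ r-(p+q)),
          mul_nonneg (by linarith : 0 ≤ 1-A') (by linarith : 0 ≤ 1-(p+q-r)),
          mul_nonneg (by linarith : 0 ≤ 1-B) (by linarith : 0 ≤ p-q),
          mul_nonneg hB' (by linarith : 0 ≤ p-q)]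
      · rcases le_total (p+q) (1+r) with hc2 | hc2
        · linarith [mul_nonneg (by linarith : 0 ≤ 1-A) (by linarith : 0 ≤ p+q-r),
            mul_nonneg (by linarith : 0 ≤ 1-A') (by linarith : 0 ≤ 1-(p+q-r)),
            mul_nonneg (by linarith : 0 ≤ 1-B) (by linarith : 0 ≤ p-q),
            mul_nonneg hB' (by linarith : 0 ≤ p-q)]
        · linarith [mul_nonneg (by linarith : 0 ≤ 1-A) (by linarith : 0 ≤ p+q-r),
            mul_nonneg hA' (by linarith : 0 ≤ (p+q-r)-1),
            mul_nonneg (by linarith : 0 ≤ 1-B) (by linarith : 0 ≤ p-q),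
            mul_nonneg hB' (by linarith : 0 ≤ p-q)]
    · rcases le_total (p+q) r with hc | hc
      · linarith [mul_nonneg hA (by linarith : 0 ≤ r-(p+q)),
          mul_nonneg (by linarith : 0 ≤ 1-A') (by linarith : 0 ≤ 1-(p+q-r)),
          mul_nonneg (by linarith : 0 ≤ 1-B') (by linarith : 0 ≤ q-p),
          mul_nonneg hB (by linarith : 0 ≤ q-p)]
      · rcases le_total (p+q) (1+r) with hc2 | hc2
        · linarith [mul_nonneg (by linarith : 0 ≤ 1-A) (by linarith : 0 ≤ p+q-r),
            mul_nonneg (by linarith : 0 ≤ 1-A') (by linarith : 0 ≤ 1-(p+q-r)),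
            mul_nonneg (by linarith : 0 ≤ 1-B') (by linarith : 0 ≤ q-p),
            mul_nonneg hB (by linarith : 0 ≤ q-p)]
        · linarith [mul_nonneg (by linarith : 0 ≤ 1-A) (by linarith : 0 ≤ p+q-r),
            mul_nonneg hA' (by linarith : 0 ≤ (p+q-r)-1),
            mul_nonneg (by linarith : 0 ≤ 1-B') (by linarith : 0 ≤ q-p),
            mul_nonneg hB (by linarith : 0 ≤ q-p)]
  linarith [key', h1, h2, h3, h4]

/-- Incoherent bound `β_C = 4` for the coherence witness: for diagonal (incoherent)
qubit states `ρ_0, ρ_1, ρ_2` and diagonal (incoherent) POVM elements `E_{j,x}` with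
`E_{0,x} + E_{1,x} ≤ 𝟙`, the witness
`W_C = p(0|0,0) + p(0|0,1) + p(0|1,0) + p(1|1,1) + p(1|0,2)` with
`p(j|x,y) = Re Tr(E_{j,x} ρ_y)` is at most `4`. -/
theorem stmt_6 (ρ : Fin 3 → Matrix (Fin 2) (Fin 2) ℂ)
    (hρpsd : ∀ y, (ρ y).PosSemidef) (hρtr : ∀ y, (ρ y).trace = 1)
    (hρdiag : ∀ y, (ρ y).IsDiag)
    (E : Fin 2 → Fin 2 → Matrix (Fin 2) (Fin 2) ℂ)
    (hEpsd : ∀ j x, (E j x).PosSemidef) (hEdiag : ∀ j x, (E j x).IsDiag)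
    (hEsum : ∀ x, (1 - (E 0 x + E 1 x)).PosSemidef) :
    ((E 0 0 * ρ 0).trace).re + ((E 0 0 * ρ 1).trace).re +
      ((E 0 1 * ρ 0).trace).re + ((E 1 1 * ρ 1).trace).re +
      ((E 1 0 * ρ 2).trace).re ≤ 4 := by
  have hρd : ∀ y i, 0 ≤ (ρ y i i).re ∧ 0 = (ρ y i i).im := by
    intro y i; exact Complex.nonneg_iff.mp (diag_nn (hρpsd y) i)
  have hEd : ∀ j x i, 0 ≤ (E j x i i).re ∧ 0 = (E j x i i).im := by
    intro j x i; exact Complex.nonneg_iff.mp (diag_nn (hEpsd j x) i)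
  have hEim : ∀ j x i, (E j x i i).im = 0 := fun j x i => ((hEd j x i).2).symm
  have htr : ∀ y, (ρ y 0 0).re + (ρ y 1 1).re = 1 := by
    intro y
    have := congrArg Complex.re (hρtr y)
    simpa [Matrix.trace, Matrix.diag, Fin.sum_univ_two] using this
  have hsum : ∀ x i, (E 0 x i i).re + (E 1 x i i).re ≤ 1 := by
    intro x i
    have h := (Complex.nonneg_iff.mp (diag_nn (hEsum x) i)).1
    simpa [Matrix.sub_apply, Matrix.add_apply, Matrix.one_apply] using h
  rw [tr_re _ _ (hEdiag 0 0) (hEim 0 0), tr_re _ _ (hEdiag 0 0) (hEim 0 0),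
    tr_re _ _ (hEdiag 0 1) (hEim 0 1), tr_re _ _ (hEdiag 1 1) (hEim 1 1),
    tr_re _ _ (hEdiag 1 0) (hEim 1 0)]
  have := key (ρ 0 0 0).re (ρ 0 1 1).re (ρ 1 0 0).re (ρ 1 1 1).re (ρ 2 0 0).re (ρ 2 1 1).re
    (E 0 0 0 0).re (E 0 0 1 1).re (E 0 1 0 0).re (E 0 1 1 1).re
    (E 1 0 0 0).re (E 1 0 1 1).re (E 1 1 0 0).re (E 1 1 1 1).re
    (hρd 0 0).1 (hρd 0 1).1 (hρd 1 0).1 (hρd 1 1).1 (hρd 2 0).1 (hρd 2 1).1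
    (htr 0) (htr 1) (htr 2)
    (hEd 0 0 0).1 (hEd 0 0 1).1 (hEd 0 1 0).1 (hEd 0 1 1).1
    (hEd 1 0 0).1 (hEd 1 0 1).1 (hEd 1 1 0).1 (hEd 1 1 1).1
    (hsum 0 0) (hsum 0 1) (hsum 1 0) (hsum 1 1)
  linarith
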